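/- Let U₁ = (M₁, {F₁}) be a complete deterministic Muller acceptor with a single final state set F₁, and let U₂ = (M₂, 𝓕₂) be a complete deterministic Muller acceptor over the same finite alphabet, both with finite state sets. Then ⟦U₁⟧ ⊆ ⟦U₂⟧ if and only if for every reachable state (q₁, q₂) of the product automaton M₁ × M₂ with q₁ ∈ F₁, L(M₁, F₁, q₁) ⊆ ⟦U₂^{q₂}⟧, where L(M₁, F₁, q₁) is the set of ω-words whose run in M₁ starting at q₁ visits only states of F₁ and visits every state of F₁ infinitely often, and U₂^{q₂} is U₂ with initial state replaced by q₂. -/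

import Mathlib

open Filter

/-- Extended transition function: `dstar δ q x` is the state reached from `q` reading `x`. -/
def dstar {Q A : Type*} (δ : Q → A → Q) (q : Q) (x : List A) : Q := x.foldl δ q

/-- The run of a deterministic automaton on an ω-word from state `q`. -/
def run {Q A : Type*} (δ : Q → A → Q) (q : Q) (w : ℕ → A) : ℕ → Q
  | 0 => q
  | n + 1 => δ (run δ q w n) (w n)

/-- The set of states visited infinitely often by the run on `w` from `q`. -/
def infOcc {Q A : Type*} (δ : Q → A → Q) (q : Q) (w : ℕ → A) : Set Q :=
  {p | ∃ᶠ n in atTop, run δ q w n = p}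

/-- `C` is a strongly connected component of the automaton with transitions `δ`. -/
def IsSCC {Q A : Type*} (δ : Q → A → Q) (C : Set Q) : Prop :=
  C.Nonempty ∧ ∀ q₁ ∈ C, ∀ q₂ ∈ C, ∃ x : List A, x ≠ [] ∧ dstar δ q₁ x = q₂ ∧
    ∀ x', x' <+: x → dstar δ q₁ x' ∈ C

/-- `q` is reachable from the initial state `qι`. -/
def Reachable {Q A : Type*} (δ : Q → A → Q) (qι q : Q) : Prop :=
  ∃ x : List A, dstar δ qι x = q

/-- The ultimately periodic ω-word `u(v)^ω`. -/
def upWord {A : Type*} (u v : List A) (hv : v ≠ []) : ℕ → A := fun n =>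
  if h : n < u.length then u[n]
  else v[(n - u.length) % v.length]'(Nat.mod_lt _ (List.length_pos_iff.mpr hv))

/-- The transition function of the product automaton. -/
def prodStep {Q₁ Q₂ A : Type*} (δ₁ : Q₁ → A → Q₁) (δ₂ : Q₂ → A → Q₂) :
    Q₁ × Q₂ → A → Q₁ × Q₂ := fun p a => (δ₁ p.1 a, δ₂ p.2 a)

/-- The ω-word `x·z` obtained by prepending the finite word `x` to `z`. -/
def prepend {A : Type*} (x : List A) (z : ℕ → A) : ℕ → A := fun n =>
  if h : n < x.length then x[n] else z (n - x.length)

/-- `L(M, F, q)`: the ω-words whose run from `q` stays in `F` and visits every state of `F`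
infinitely often. -/
def LMFq {Q A : Type*} (δ : Q → A → Q) (F : Set Q) (q : Q) : Set (ℕ → A) :=
  {w | (∀ n : ℕ, run δ q w n ∈ F) ∧ F ⊆ infOcc δ q w}

lemma run_add {Q A : Type*} (δ : Q → A → Q) (q : Q) (w : ℕ → A) (m n : ℕ) :
    run δ q w (m + n) = run δ (run δ q w m) (fun k => w (k + m)) n := by
  induction n with
  | zero => rfl
  | succ n ih =>
    show run δ q w ((m + n) + 1) = _
    simp only [run, ih]
    congr 1
    exact congrArg w (Nat.add_comm m n)

lemma infOcc_shift {Q A : Type*} (δ : Q → A → Q) (q : Q) (w : ℕ → A) (m : ℕ) :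
    infOcc δ q w = infOcc δ (run δ q w m) (fun k => w (k + m)) := by
  ext p
  simp only [infOcc, Set.mem_setOf_eq, frequently_atTop]
  constructor
  · intro h a
    obtain ⟨b, hb, hb'⟩ := h (a + m)
    refine ⟨b - m, by omega, ?_⟩
    rw [← run_add]
    rwa [show m + (b - m) = b by omega]
  · intro h a
    obtain ⟨b, hb, hb'⟩ := h a
    exact ⟨m + b, by omega, by rwa [run_add]⟩

lemma run_eq_dstar {Q A : Type*} (δ : Q → A → Q) (q : Q) (w : ℕ → A) (n : ℕ) :
    run δ q w n = dstar δ q ((List.range n).map w) := by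
  induction n with
  | zero => rfl
  | succ n ih =>
    rw [List.range_succ, List.map_append]
    simp [dstar, run, ih, List.foldl_append]

lemma run_prod {Q₁ Q₂ A : Type*} (δ₁ : Q₁ → A → Q₁) (δ₂ : Q₂ → A → Q₂)
    (q₁ : Q₁) (q₂ : Q₂) (w : ℕ → A) (n : ℕ) :
    run (prodStep δ₁ δ₂) (q₁, q₂) w n = (run δ₁ q₁ w n, run δ₂ q₂ w n) := by
  induction n with
  | zero => rfl
  | succ n ih => simp [run, ih, prodStep]

lemma dstar_prod {Q₁ Q₂ A : Type*} (δ₁ : Q₁ → A → Q₁) (δ₂ : Q₂ → A → Q₂)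
    (q₁ : Q₁) (q₂ : Q₂) (x : List A) :
    dstar (prodStep δ₁ δ₂) (q₁, q₂) x = (dstar δ₁ q₁ x, dstar δ₂ q₂ x) := by
  induction x generalizing q₁ q₂ with
  | nil => rfl
  | cons a l ih => simp [dstar, prodStep, List.foldl_cons] at ih ⊢; exact ih _ _

lemma run_prepend_le {Q A : Type*} (δ : Q → A → Q) (q : Q) (x : List A) (w : ℕ → A)
    (n : ℕ) (hn : n ≤ x.length) :
    run δ q (prepend x w) n = dstar δ q (x.take n) := by
  induction n with
  | zero => rfl
  | succ n ih =>
    have hn' : n < x.length := hn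
    rw [show run δ q (prepend x w) (n+1) = δ (run δ q (prepend x w) n) (prepend x w n) from rfl,
        ih hn'.le, prepend]
    rw [dif_pos hn',
      show List.take (n+1) x = List.take n x ++ [x[n]] by
        rw [List.take_succ, List.getElem?_eq_getElem hn']; rfl]
    simp only [dstar, List.foldl_append, List.foldl_cons, List.foldl_nil]

lemma infOcc_prepend {Q A : Type*} (δ : Q → A → Q) (q : Q) (x : List A) (w : ℕ → A) :
    infOcc δ q (prepend x w) = infOcc δ (dstar δ q x) w := by
  have h1 : run δ q (prepend x w) x.length = dstar δ q x := by
    rw [run_prepend_le δ q x w x.length le_rfl, List.take_length]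
  have h2 : (fun k => prepend x w (k + x.length)) = w := by
    funext k
    rw [prepend, dif_neg (by omega)]
    congr 1
    omega
  rw [infOcc_shift δ q (prepend x w) x.length, h1, h2]

lemma eventually_mem_infOcc {Q A : Type*} [Finite Q] (δ : Q → A → Q) (q : Q) (w : ℕ → A) :
    ∀ᶠ n in atTop, run δ q w n ∈ infOcc δ q w := by
  have key : ∀ p : Q, ∀ᶠ n in atTop, run δ q w n = p → p ∈ infOcc δ q w := by
    intro p
    by_cases hp : p ∈ infOcc δ q w
    · exact Eventually.of_forall fun n _ => hp
    · simp only [infOcc, Set.mem_setOf_eq, not_frequently] at hp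
      filter_upwards [hp] with n hn h
      exact absurd h hn
  filter_upwards [Filter.eventually_all.mpr key] with n hn
  exact hn _ rfl

/-- For a DMA `U₁` with a single final state set `F₁` and a DMA `U₂`, inclusion holds iff for
every reachable product state `(p₁, p₂)` with `p₁ ∈ F₁`, `L(M₁, F₁, p₁) ⊆ ⟦U₂^{p₂}⟧`. -/
theorem stmt15 {A Q₁ Q₂ : Type*} [Fintype A] [Fintype Q₁] [Fintype Q₂]
    (δ₁ : Q₁ → A → Q₁) (init₁ : Q₁) (F₁ : Set Q₁)
    (δ₂ : Q₂ → A → Q₂) (init₂ : Q₂) (𝓕₂ : Set (Set Q₂)) :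
    {w : ℕ → A | infOcc δ₁ init₁ w ∈ ({F₁} : Set (Set Q₁))} ⊆
        {w | infOcc δ₂ init₂ w ∈ 𝓕₂} ↔
      ∀ p₁ : Q₁, ∀ p₂ : Q₂, Reachable (prodStep δ₁ δ₂) (init₁, init₂) (p₁, p₂) → p₁ ∈ F₁ →
        LMFq δ₁ F₁ p₁ ⊆ {w | infOcc δ₂ p₂ w ∈ 𝓕₂} := by
  constructor
  · intro h p₁ p₂ hreach hp₁ w hw
    obtain ⟨x, hx⟩ := hreach
    rw [dstar_prod] at hx
    have hx1 : dstar δ₁ init₁ x = p₁ := congrArg Prod.fst hx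
    have hx2 : dstar δ₂ init₂ x = p₂ := congrArg Prod.snd hx
    have key₁ : infOcc δ₁ init₁ (prepend x w) = F₁ := by
      rw [infOcc_prepend, hx1]
      apply Set.Subset.antisymm
      · intro p hp
        obtain ⟨n, hn⟩ := hp.exists
        rw [← hn]; exact hw.1 n
      · exact hw.2
    have h2 := h (show infOcc δ₁ init₁ (prepend x w) ∈ ({F₁} : Set (Set Q₁)) by
      simp [key₁])
    rwa [Set.mem_setOf_eq, infOcc_prepend, hx2] at h2
  · intro h w hw
    simp only [Set.mem_setOf_eq, Set.mem_singleton_iff] at hw ⊢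
    obtain ⟨n₀, hn₀⟩ := eventually_atTop.mp (eventually_mem_infOcc δ₁ init₁ w)
    set p₁ := run δ₁ init₁ w n₀ with hp₁def
    set p₂ := run δ₂ init₂ w n₀ with hp₂def
    have hreach : Reachable (prodStep δ₁ δ₂) (init₁, init₂) (p₁, p₂) := by
      refine ⟨(List.range n₀).map w, ?_⟩
      rw [← run_eq_dstar, run_prod]
    have hp₁ : p₁ ∈ F₁ := by
      have := hn₀ n₀ le_rfl
      rwa [hw] at this
    have hw' : (fun k => w (k + n₀)) ∈ LMFq δ₁ F₁ p₁ := by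
      constructor
      · intro n
        have he : run δ₁ p₁ (fun k => w (k + n₀)) n = run δ₁ init₁ w (n₀ + n) :=
          (run_add δ₁ init₁ w n₀ n).symm
        rw [he, ← hw]
        exact hn₀ _ (by omega)
      · have : F₁ = infOcc δ₁ p₁ (fun k => w (k + n₀)) := by
          rw [← hw, infOcc_shift δ₁ init₁ w n₀]
        exact this.le
    have h3 := h p₁ p₂ hreach hp₁ hw'
    rw [Set.mem_setOf_eq, ← infOcc_shift δ₂ init₂ w n₀] at h3
    exact h3
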